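/- arXiv:1111.5357 — 3 statements merged into one kernel-verified Lean document; each statement's English description precedes it below -/
import Mathlib

section
/- If G is a loop-free digraph and G^ℓ is obtained from G by adding a self-loop at every vertex, then crank(G^ℓ) = crank(G) + 1, provided G has at least one vertex. -/
open scoped Classical

variable {V : Type*}

/-- `b` is reachable from `a` by a (possibly empty) directed path staying inside `S`. -/
def ReachIn (E : V → V → Prop) (S : Finset V) (a b : V) : Prop :=
  Relation.ReflTransGen (fun x y => x ∈ S ∧ y ∈ S ∧ E x y) a b

/-- The induced subdigraph `G[S]` is strongly connected. -/
def StronglyConnIn (E : V → V → Prop) (S : Finset V) : Prop :=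
  ∀ a ∈ S, ∀ b ∈ S, ReachIn E S a b

/-- The induced subdigraph `G[S]` contains at least one edge. -/
def HasEdgeIn (E : V → V → Prop) (S : Finset V) : Prop :=
  ∃ a ∈ S, ∃ b ∈ S, E a b

/-- `G[S]` is acyclic: every strongly connected component of `G[S]` is trivial,
equivalently there is no edge lying on a closed walk inside `S`. -/
def AcyclicIn (E : V → V → Prop) (S : Finset V) : Prop :=
  ¬ ∃ a ∈ S, ∃ b ∈ S, E a b ∧ ReachIn E S b a

open Classical in
/-- The strongly connected component of `v` in the induced subdigraph `G[S]`. -/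
noncomputable def sccOf [DecidableEq V] (E : V → V → Prop) (S : Finset V) (v : V) : Finset V :=
  S.filter (fun u => ReachIn E S v u ∧ ReachIn E S u v)

open Classical in
/-- Fuel-based auxiliary function implementing the recursive definition of cycle rank. -/
noncomputable def crankAux [DecidableEq V] (E : V → V → Prop) : ℕ → Finset V → ℕ
  | 0, _ => 0
  | n + 1, S =>
    if AcyclicIn E S then 0
    else if StronglyConnIn E S then
      1 + sInf {m | ∃ v ∈ S, crankAux E n (S.erase v) = m}
    else
      S.sup (fun v => crankAux E n (sccOf E S v))

/-- The cycle rank of the digraph `(V, E)`. -/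
noncomputable def crank [DecidableEq V] [Fintype V] (E : V → V → Prop) : ℕ :=
  crankAux E (Fintype.card V) Finset.univ


section Aux

variable {V : Type*} [DecidableEq V]

lemma reachIn_mono {E F : V → V → Prop} (h : ∀ a b, E a b → F a b) {S : Finset V} {a b : V}
    (hr : ReachIn E S a b) : ReachIn F S a b :=
  Relation.ReflTransGen.mono (r := fun x y => x ∈ S ∧ y ∈ S ∧ E x y)
    (p := fun x y => x ∈ S ∧ y ∈ S ∧ F x y)
    (fun x y hxy => ⟨hxy.1, hxy.2.1, h _ _ hxy.2.2⟩) a b hr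

lemma reachIn_addLoops {E : V → V → Prop} {S : Finset V} {a b : V} :
    ReachIn (fun a b => E a b ∨ a = b) S a b ↔ ReachIn E S a b := by
  constructor
  · intro h
    induction h with
    | refl => exact .refl
    | tail _ hstep ih =>
      obtain ⟨hx, hy, hE | rfl⟩ := hstep
      · exact ih.tail ⟨hx, hy, hE⟩
      · exact ih
  · exact reachIn_mono (fun a b h => Or.inl h)

lemma stronglyConnIn_addLoops {E : V → V → Prop} {S : Finset V} :
    StronglyConnIn (fun a b => E a b ∨ a = b) S ↔ StronglyConnIn E S := by
  constructor
  · exact fun h a ha b hb => reachIn_addLoops.mp (h a ha b hb)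
  · exact fun h a ha b hb => reachIn_addLoops.mpr (h a ha b hb)

lemma sccOf_addLoops (E : V → V → Prop) (S : Finset V) (v : V) :
    sccOf (fun a b => E a b ∨ a = b) S v = sccOf E S v := by
  ext u
  simp only [sccOf, Finset.mem_filter, reachIn_addLoops]

lemma not_acyclicIn_addLoops {E : V → V → Prop} {S : Finset V} (hS : S.Nonempty) :
    ¬ AcyclicIn (fun a b => E a b ∨ a = b) S := by
  obtain ⟨v, hv⟩ := hS
  exact fun h => h ⟨v, hv, v, hv, Or.inr rfl, Relation.ReflTransGen.refl⟩

lemma acyclicIn_empty (E : V → V → Prop) : AcyclicIn E (∅ : Finset V) := by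
  rintro ⟨a, ha, -⟩
  exact absurd ha (Finset.notMem_empty a)

lemma acyclicIn_singleton {E : V → V → Prop} (hlf : ∀ v, ¬ E v v) (v : V) :
    AcyclicIn E ({v} : Finset V) := by
  rintro ⟨a, ha, b, hb, hab, -⟩
  rw [Finset.mem_singleton] at ha hb
  subst ha; subst hb
  exact hlf _ hab

lemma crankAux_acyclic_zero {E : V → V → Prop} (n : ℕ) {S : Finset V}
    (hac : AcyclicIn E S) : crankAux E n S = 0 := by
  cases n with
  | zero => rfl
  | succ n => simp only [crankAux, if_pos hac]

lemma not_acyclicIn_of_sconn {E : V → V → Prop} {S : Finset V}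
    (hsc : StronglyConnIn E S) (h2 : 2 ≤ S.card) : ¬ AcyclicIn E S := by
  obtain ⟨a, ha, b, hb, hab⟩ := Finset.one_lt_card.mp h2
  intro hac
  rcases (hsc a ha b hb).cases_head with rfl | ⟨c, hstep, -⟩
  · exact hab rfl
  · exact hac ⟨a, ha, c, hstep.2.1, hstep.2.2, hsc c hstep.2.1 a ha⟩

lemma mem_sccOf_self {E : V → V → Prop} {S : Finset V} {v : V} (hv : v ∈ S) :
    v ∈ sccOf E S v := by
  simp only [sccOf, Finset.mem_filter]
  exact ⟨hv, Relation.ReflTransGen.refl, Relation.ReflTransGen.refl⟩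

lemma sccOf_ssubset {E : V → V → Prop} {S : Finset V}
    (hnsc : ¬ StronglyConnIn E S) {v : V} (hv : v ∈ S) : sccOf E S v ⊂ S := by
  refine ⟨Finset.filter_subset _ _, fun hsub => hnsc ?_⟩
  intro a ha b hb
  have ha' := hsub ha
  have hb' := hsub hb
  simp only [sccOf, Finset.mem_filter] at ha' hb'
  exact ha'.2.2.trans hb'.2.1

lemma sccOf_eq_singleton {E : V → V → Prop} {S : Finset V}
    (hac : AcyclicIn E S) {v : V} (hv : v ∈ S) : sccOf E S v = {v} := by
  ext u
  simp only [sccOf, Finset.mem_filter, Finset.mem_singleton]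
  constructor
  · rintro ⟨hu, hvu, huv⟩
    rcases hvu.cases_head with rfl | ⟨c, hstep, hcu⟩
    · rfl
    · exact absurd ⟨v, hv, c, hstep.2.1, hstep.2.2, hcu.trans huv⟩ hac
  · rintro rfl
    exact ⟨hv, Relation.ReflTransGen.refl, Relation.ReflTransGen.refl⟩

lemma finset_sup_add_one {S : Finset V} (hS : S.Nonempty) (f : V → ℕ) :
    S.sup (fun v => f v + 1) = S.sup f + 1 := by
  rw [← Finset.sup'_eq_sup hS, ← Finset.sup'_eq_sup hS]
  apply le_antisymm
  · exact Finset.sup'_le _ _ fun v hv => Nat.add_le_add_right (Finset.le_sup' f hv) 1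
  · obtain ⟨v, hv, hfv⟩ := Finset.exists_mem_eq_sup' hS f
    rw [hfv]
    exact Finset.le_sup' (fun v => f v + 1) hv

lemma sInf_add_one {S : Finset V} (hS : S.Nonempty) (f : V → ℕ) :
    sInf {m | ∃ v ∈ S, f v + 1 = m} = sInf {m | ∃ v ∈ S, f v = m} + 1 := by
  obtain ⟨v0, hv0⟩ := hS
  have hA : {m | ∃ v ∈ S, f v = m}.Nonempty := ⟨f v0, v0, hv0, rfl⟩
  have hB : {m | ∃ v ∈ S, f v + 1 = m}.Nonempty := ⟨f v0 + 1, v0, hv0, rfl⟩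
  apply le_antisymm
  · obtain ⟨v, hv, hfv⟩ := Nat.sInf_mem hA
    exact Nat.sInf_le ⟨v, hv, by omega⟩
  · obtain ⟨v, hv, hfv⟩ := Nat.sInf_mem hB
    have h2 := Nat.sInf_le (show f v ∈ {m | ∃ v ∈ S, f v = m} from ⟨v, hv, rfl⟩)
    omega

lemma crankAux_addLoops (E : V → V → Prop) (hlf : ∀ v, ¬ E v v) :
    ∀ n (S : Finset V), S.Nonempty → S.card ≤ n →
      crankAux (fun a b => E a b ∨ a = b) n S = crankAux E n S + 1 := by
  intro n
  induction n with
  | zero =>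
    intro S hS hcard
    exact absurd (Finset.card_eq_zero.mp (Nat.le_zero.mp hcard)) hS.ne_empty
  | succ n ih =>
    intro S hS hcard
    simp only [crankAux]
    rw [if_neg (not_acyclicIn_addLoops hS)]
    by_cases hsc : StronglyConnIn E S
    · rw [if_pos (stronglyConnIn_addLoops.mpr hsc)]
      by_cases h1 : S.card = 1
      · obtain ⟨v, rfl⟩ := Finset.card_eq_one.mp h1
        rw [if_pos (acyclicIn_singleton hlf v)]
        have hzero : crankAux (fun a b => E a b ∨ a = b) n (({v} : Finset V).erase v) = 0 := by
          rw [Finset.erase_singleton]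
          exact crankAux_acyclic_zero n (acyclicIn_empty _)
        have hset : {m | ∃ w ∈ ({v} : Finset V),
            crankAux (fun a b => E a b ∨ a = b) n (({v} : Finset V).erase w) = m} = {0} := by
          ext m
          simp only [Finset.mem_singleton, Set.mem_setOf_eq, Set.mem_singleton_iff]
          constructor
          · rintro ⟨w, rfl, rfl⟩
            rw [hzero]
          · rintro rfl
            exact ⟨v, rfl, hzero⟩
        rw [hset, csInf_singleton]
      · have h2 : 2 ≤ S.card := by
          rcases Nat.lt_or_ge S.card 2 with h | h
          · have := Finset.card_pos.mpr hS
            omega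
          · exact h
        rw [if_neg (not_acyclicIn_of_sconn hsc h2), if_pos hsc]
        have hrw : ∀ v ∈ S, crankAux (fun a b => E a b ∨ a = b) n (S.erase v)
            = crankAux E n (S.erase v) + 1 := by
          intro v hv
          apply ih
          · rw [← Finset.card_pos, Finset.card_erase_of_mem hv]
            omega
          · rw [Finset.card_erase_of_mem hv]
            omega
        have hset : {m | ∃ v ∈ S, crankAux (fun a b => E a b ∨ a = b) n (S.erase v) = m}
            = {m | ∃ v ∈ S, crankAux E n (S.erase v) + 1 = m} := by
          ext m
          constructor
          · rintro ⟨v, hv, rfl⟩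
            exact ⟨v, hv, (hrw v hv).symm⟩
          · rintro ⟨v, hv, rfl⟩
            exact ⟨v, hv, hrw v hv⟩
        rw [hset, sInf_add_one hS]
        omega
    · rw [if_neg (fun h => hsc (stronglyConnIn_addLoops.mp h))]
      have hrec : ∀ v ∈ S, crankAux (fun a b => E a b ∨ a = b) n
          (sccOf (fun a b => E a b ∨ a = b) S v) = crankAux E n (sccOf E S v) + 1 := by
        intro v hv
        rw [sccOf_addLoops]
        apply ih
        · exact ⟨v, mem_sccOf_self hv⟩
        · have := Finset.card_lt_card (sccOf_ssubset hsc hv)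
          omega
      rw [Finset.sup_congr rfl hrec]
      by_cases hac : AcyclicIn E S
      · rw [if_pos hac]
        have hzero : ∀ v ∈ S, crankAux E n (sccOf E S v) + 1 = 1 := by
          intro v hv
          rw [sccOf_eq_singleton hac hv,
            crankAux_acyclic_zero n (acyclicIn_singleton hlf v)]
        rw [Finset.sup_congr rfl hzero, Finset.sup_const hS]
      · rw [if_neg hac, if_neg hsc]
        exact finset_sup_add_one hS (fun v => crankAux E n (sccOf E S v))

end Aux

/-- If `G` is loop-free and `G^ℓ` is obtained by adding a self-loop at every
vertex, then `crank(G^ℓ) = crank(G) + 1`, provided `G` has at least one vertex. -/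
theorem crank_addLoops {V : Type*} [DecidableEq V] [Fintype V] [Nonempty V]
    (E : V → V → Prop) (hloopfree : ∀ v, ¬ E v v) :
    crank (fun a b => E a b ∨ a = b) = crank E + 1 := by
  unfold crank
  exact crankAux_addLoops E hloopfree (Fintype.card V) Finset.univ
    Finset.univ_nonempty (le_of_eq (Finset.card_univ))
end

section
/- For every digraph G, the weak separator number of G is at most the directed pathwidth of G: snum(G) ≤ dpw(G). -/
open scoped Classical

variable {V : Type*}

/-- `S` is a weak balanced separator for `U`: every strongly connected component of
`G[U ∖ S]` contains at most `⌈|U ∖ S|/2⌉` vertices. -/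
def IsWeakBalSep {V : Type*} [DecidableEq V] (E : V → V → Prop) (U S : Finset V) : Prop :=
  ∀ v ∈ U \ S, (sccOf E (U \ S) v).card ≤ ((U \ S).card + 1) / 2
/-- The minimum size of a weak balanced separator for `U`. -/
noncomputable def minWeakSep {V : Type*} [DecidableEq V] (E : V → V → Prop) (U : Finset V) : ℕ :=
  sInf {c : ℕ | ∃ S : Finset V, S.card ≤ c ∧ IsWeakBalSep E U S}

/-- The weak separator number: the maximum over all `U ⊆ V` of the minimum size of a
weak balanced separator for `U`. -/
noncomputable def snum {V : Type*} [DecidableEq V] [Fintype V] (E : V → V → Prop) : ℕ :=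
  Finset.univ.powerset.sup (minWeakSep E)
/-- `L` is a directed path decomposition of `(V, E)`: a sequence of bags covering all
vertices, such that `W_i ∩ W_k ⊆ W_j` for `i < j < k`, and each edge `(u,v)` either has
both endpoints in a common bag, or `u` occurs in a bag strictly before a bag containing `v`. -/
def IsDirPathDecomp {V : Type*} (E : V → V → Prop) (L : List (Finset V)) : Prop :=
  (∀ v : V, ∃ W ∈ L, v ∈ W) ∧
  (∀ i j k : ℕ, i < j → j < k →
    ∀ (hi : i < L.length) (hj : j < L.length) (hk : k < L.length),
      ∀ v, v ∈ L.get ⟨i, hi⟩ → v ∈ L.get ⟨k, hk⟩ → v ∈ L.get ⟨j, hj⟩) ∧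
  (∀ u v, E u v → (∃ W ∈ L, u ∈ W ∧ v ∈ W) ∨
      ∃ (i j : ℕ) (hi : i < L.length) (hj : j < L.length),
        i < j ∧ u ∈ L.get ⟨i, hi⟩ ∧ v ∈ L.get ⟨j, hj⟩)

/-- The directed pathwidth of `(V, E)`: the minimum, over all directed path
decompositions, of (maximum bag size) − 1. -/
noncomputable def dpw {V : Type*} [Fintype V] (E : V → V → Prop) : ℕ :=
  sInf {w : ℕ | ∃ L : List (Finset V), IsDirPathDecomp E L ∧ ∀ W ∈ L, W.card ≤ w + 1}

-- ===== auxiliary development =====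

/-- The `j`-th bag of a decomposition (empty if out of range). -/
def bagAux (L : List (Finset V)) (j : ℕ) : Finset V := L.getD j ∅

theorem bag_get {L : List (Finset V)} {j : ℕ} (h : j < L.length) :
    bagAux L j = L.get ⟨j, h⟩ := List.getD_eq_getElem L ∅ h

theorem bag_memL {L : List (Finset V)} {j : ℕ} (h : j < L.length) : bagAux L j ∈ L := by
  rw [bag_get h]; exact L.get_mem _

/-- `v` does not appear in any bag with index ≥ `t`. -/
def PP (L : List (Finset V)) (t : ℕ) (v : V) : Prop :=
  ∀ j, j < L.length → t ≤ j → v ∉ bagAux L j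

/-- `v` does not appear in any bag with index < `t`. -/
def QQ (L : List (Finset V)) (t : ℕ) (v : V) : Prop :=
  ∀ j, j < L.length → j < t → v ∉ bagAux L j

theorem cover_idx {E : V → V → Prop} {L : List (Finset V)} (hL : IsDirPathDecomp E L)
    (v : V) : ∃ j, j < L.length ∧ v ∈ bagAux L j := by
  obtain ⟨W, hW, hvW⟩ := hL.1 v
  obtain ⟨n, rfl⟩ := List.mem_iff_get.mp hW
  exact ⟨n.1, n.2, by rw [bag_get n.2]; exact hvW⟩

theorem not_PQ {E : V → V → Prop} {L : List (Finset V)} (hL : IsDirPathDecomp E L)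
    {t : ℕ} {v : V} (hP : PP L t v) (hQ : QQ L t v) : False := by
  obtain ⟨j, hj, hvj⟩ := cover_idx hL v
  rcases lt_or_ge j t with h | h
  · exact hQ j hj h hvj
  · exact hP j hj h hvj

theorem mid_bag {E : V → V → Prop} {L : List (Finset V)} (hL : IsDirPathDecomp E L)
    {i j k : ℕ} (hij : i < j) (hjk : j < k) (hk : k < L.length) {v : V}
    (hvi : v ∈ bagAux L i) (hvk : v ∈ bagAux L k) : v ∈ bagAux L j := by
  have hi : i < L.length := by omega
  have hj : j < L.length := by omega
  rw [bag_get hi] at hvi; rw [bag_get hk] at hvk; rw [bag_get hj]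
  exact hL.2.1 i j k hij hjk hi hj hk v hvi hvk

theorem QQ_of_edge {E : V → V → Prop} {L : List (Finset V)} (hL : IsDirPathDecomp E L)
    {t : ℕ} {b c : V} (hb : QQ L t b) (hc : PP L t c ∨ QQ L t c) (hE : E b c) :
    QQ L t c := by
  rcases hc with hc | hc
  swap
  · exact hc
  · exfalso
    rcases hL.2.2 b c hE with ⟨W, hW, hbW, hcW⟩ | ⟨i, j, hi, hj, hij, hbi, hcj⟩
    · obtain ⟨n, rfl⟩ := List.mem_iff_get.mp hW
      rcases lt_or_ge n.1 t with h | h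
      · exact hb n.1 n.2 h (by rw [bag_get n.2]; exact hbW)
      · exact hc n.1 n.2 h (by rw [bag_get n.2]; exact hcW)
    · have h1 : t ≤ i := by
        by_contra h
        exact hb i hi (by omega) (by rw [bag_get hi]; exact hbi)
      exact hc j hj (by omega) (by rw [bag_get hj]; exact hcj)

theorem QQ_of_reach {E : V → V → Prop} {L : List (Finset V)} (hL : IsDirPathDecomp E L)
    {S' : Finset V} {t : ℕ} (hcov : ∀ v ∈ S', PP L t v ∨ QQ L t v)
    {x y : V} (hr : ReachIn E S' x y) (hx : QQ L t x) : QQ L t y := by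
  induction hr with
  | refl => exact hx
  | tail _ e ih => exact QQ_of_edge hL ih (hcov _ e.2.1) e.2.2

theorem scc_subset [DecidableEq V] {E : V → V → Prop} {L : List (Finset V)}
    (hL : IsDirPathDecomp E L) {U S : Finset V} {t : ℕ}
    (hcov : ∀ v ∈ U \ S, PP L t v ∨ QQ L t v) (v : V) (hv : v ∈ U \ S) :
    sccOf E (U \ S) v ⊆ (U \ S).filter (PP L t) ∨
      sccOf E (U \ S) v ⊆ (U \ S).filter (QQ L t) := by
  by_cases hQ : QQ L t v
  · right; intro u hu
    rw [sccOf, Finset.mem_filter] at hu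
    exact Finset.mem_filter.mpr ⟨hu.1, QQ_of_reach hL hcov hu.2.1 hQ⟩
  · left; intro u hu
    rw [sccOf, Finset.mem_filter] at hu
    refine Finset.mem_filter.mpr ⟨hu.1, ?_⟩
    rcases hcov u hu.1 with h | h
    · exact h
    · exact absurd (QQ_of_reach hL hcov hu.2.2 h) hQ

theorem filter_PQ_card [DecidableEq V] {E : V → V → Prop} {L : List (Finset V)}
    (hL : IsDirPathDecomp E L) {U S : Finset V} {t : ℕ}
    (hcov : ∀ v ∈ U \ S, PP L t v ∨ QQ L t v) :
    ((U \ S).filter (PP L t)).card + ((U \ S).filter (QQ L t)).card = (U \ S).card := by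
  have h : (U \ S).filter (QQ L t) = (U \ S).filter (fun v => ¬ PP L t v) := by
    ext v
    simp only [Finset.mem_filter]
    constructor
    · rintro ⟨h1, h2⟩; exact ⟨h1, fun hp => not_PQ hL hp h2⟩
    · rintro ⟨h1, h2⟩; exact ⟨h1, (hcov v h1).resolve_left h2⟩
  rw [h, Finset.card_filter_add_card_filter_not]

theorem isWeakBalSep_of [DecidableEq V] {E : V → V → Prop} {L : List (Finset V)}
    (hL : IsDirPathDecomp E L) {U S : Finset V} {t : ℕ}
    (hcov : ∀ v ∈ U \ S, PP L t v ∨ QQ L t v)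
    (h1 : 2 * ((U \ S).filter (PP L t)).card ≤ (U \ S).card + 1)
    (h2 : 2 * ((U \ S).filter (QQ L t)).card ≤ (U \ S).card + 1) :
    IsWeakBalSep E U S := by
  intro v hv
  have key : ∀ T : Finset V, sccOf E (U \ S) v ⊆ T → 2 * T.card ≤ (U \ S).card + 1 →
      (sccOf E (U \ S) v).card ≤ ((U \ S).card + 1) / 2 := by
    intro T hsub hT
    have := Finset.card_le_card hsub
    omega
  rcases scc_subset hL hcov v hv with h | h
  exacts [key _ h h1, key _ h h2]

/-- `U`-vertices appearing only in bags with index < `t`. -/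
noncomputable def AA [DecidableEq V] (L : List (Finset V)) (U : Finset V) (t : ℕ) : Finset V :=
  U.filter (PP L t)

/-- `U`-vertices appearing only in bags with index ≥ `t`. -/
noncomputable def BB [DecidableEq V] (L : List (Finset V)) (U : Finset V) (t : ℕ) : Finset V :=
  U.filter (QQ L t)

theorem mem_AA [DecidableEq V] {L : List (Finset V)} {U : Finset V} {t : ℕ} {v : V} :
    v ∈ AA L U t ↔ v ∈ U ∧ PP L t v := Finset.mem_filter

theorem mem_BB [DecidableEq V] {L : List (Finset V)} {U : Finset V} {t : ℕ} {v : V} :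
    v ∈ BB L U t ↔ v ∈ U ∧ QQ L t v := Finset.mem_filter

theorem exists_weak_sep [DecidableEq V] (E : V → V → Prop) (L : List (Finset V))
    (hL : IsDirPathDecomp E L) (w : ℕ) (hw : ∀ W ∈ L, W.card ≤ w + 1) (U : Finset V) :
    ∃ S : Finset V, S.card ≤ w ∧ IsWeakBalSep E U S := by
  classical
  rcases U.eq_empty_or_nonempty with rfl | ⟨v0, hv0⟩
  · refine ⟨∅, by simp, fun v hv => ?_⟩
    simp at hv
  have hAmono : ∀ s t, s ≤ t → AA L U s ⊆ AA L U t := by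
    intro s t hst v hv
    obtain ⟨hvU, hP⟩ := mem_AA.mp hv
    exact mem_AA.mpr ⟨hvU, fun j hj htj => hP j hj (by omega)⟩
  have hBmono : ∀ s t, s ≤ t → BB L U t ⊆ BB L U s := by
    intro s t hst v hv
    obtain ⟨hvU, hQ⟩ := mem_BB.mp hv
    exact mem_BB.mpr ⟨hvU, fun j hj hjt => hQ j hj (by omega)⟩
  have hBlen : BB L U L.length = ∅ := by
    refine Finset.filter_eq_empty_iff.mpr (fun {v} _ hQ => ?_)
    obtain ⟨j, hj, hvj⟩ := cover_idx hL v
    exact hQ j hj hj hvj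
  have hex : ∃ t, (BB L U t).card ≤ (AA L U t).card := ⟨L.length, by simp [hBlen]⟩
  set t := Nat.find hex with htdef
  have ht : (BB L U t).card ≤ (AA L U t).card := Nat.find_spec hex
  have htmin : ∀ s, s < t → (AA L U s).card < (BB L U s).card := by
    intro s hs
    have := Nat.find_min hex hs
    omega
  have ht1 : 1 ≤ t := by
    by_contra h
    have h0 : t = 0 := by omega
    have hA0 : AA L U 0 = ∅ := by
      refine Finset.filter_eq_empty_iff.mpr (fun {v} _ hP => ?_)
      obtain ⟨j, hj, hvj⟩ := cover_idx hL v
      exact hP j hj (Nat.zero_le j) hvj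
    have hB0 : BB L U 0 = U := by
      refine Finset.filter_true_of_mem (fun v _ => ?_)
      intro j hj hj0
      omega
    rw [h0, hA0, hB0, Finset.card_empty] at ht
    have := Finset.card_pos.mpr ⟨v0, hv0⟩
    omega
  have htlen : t ≤ L.length := Nat.find_min' hex (by simp [hBlen])
  have hit : t - 1 < L.length := by omega
  have hbagcard : (bagAux L (t-1)).card ≤ w + 1 := hw _ (bag_memL hit)
  have hAsub : AA L U (t-1) ⊆ AA L U t := hAmono _ _ (by omega)
  have hBsub : BB L U t ⊆ BB L U (t-1) := hBmono _ _ (by omega)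
  have hAbag : ∀ v ∈ AA L U (t-1), v ∉ bagAux L (t-1) := fun v hv =>
    (mem_AA.mp hv).2 (t-1) hit le_rfl
  have hBbag : ∀ v ∈ BB L U t, v ∉ bagAux L (t-1) := fun v hv =>
    (mem_BB.mp hv).2 (t-1) hit (by omega)
  have hAd : AA L U t \ AA L U (t-1) = AA L U t ∩ bagAux L (t-1) := by
    ext v
    simp only [Finset.mem_sdiff, Finset.mem_inter]
    constructor
    · rintro ⟨hvA, hnv⟩
      refine ⟨hvA, ?_⟩
      by_contra hvb
      refine hnv (mem_AA.mpr ⟨(mem_AA.mp hvA).1, fun j hj htj => ?_⟩)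
      rcases Nat.eq_or_lt_of_le htj with heq | hlt
      · rw [← heq]; exact hvb
      · exact (mem_AA.mp hvA).2 j hj (by omega)
    · rintro ⟨hvA, hvb⟩
      exact ⟨hvA, fun hvA' => hAbag v hvA' hvb⟩
  have hBd : BB L U (t-1) \ BB L U t = BB L U (t-1) ∩ bagAux L (t-1) := by
    ext v
    simp only [Finset.mem_sdiff, Finset.mem_inter]
    constructor
    · rintro ⟨hvB, hnv⟩
      refine ⟨hvB, ?_⟩
      by_contra hvb
      refine hnv (mem_BB.mpr ⟨(mem_BB.mp hvB).1, fun j hj hjt => ?_⟩)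
      rcases Nat.lt_or_ge j (t-1) with hlt | hge
      · exact (mem_BB.mp hvB).2 j hj hlt
      · have hje : j = t - 1 := by omega
        rw [hje]; exact hvb
    · rintro ⟨hvB, hvb⟩
      exact ⟨hvB, fun hvB' => hBbag v hvB' hvb⟩
  have hcardA : (AA L U t ∩ bagAux L (t-1)).card = (AA L U t).card - (AA L U (t-1)).card := by
    rw [← hAd, Finset.card_sdiff_of_subset hAsub]
  have hcardB : (BB L U (t-1) ∩ bagAux L (t-1)).card
      = (BB L U (t-1)).card - (BB L U t).card := by
    rw [← hBd, Finset.card_sdiff_of_subset hBsub]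
  have hAle : (AA L U (t-1)).card ≤ (AA L U t).card := Finset.card_le_card hAsub
  have hBle : (BB L U t).card ≤ (BB L U (t-1)).card := Finset.card_le_card hBsub
  have htm : (AA L U (t-1)).card < (BB L U (t-1)).card := htmin (t-1) (by omega)
  rcases lt_or_ge (AA L U (t-1)).card (BB L U t).card with hcase | hcase
  · -- LEFT CUT: threshold t, X taken from A t ∩ bag (t-1)
    obtain ⟨X, hXsub, hXcard⟩ := Finset.exists_subset_card_eq
      (show (BB L U t).card - (AA L U (t-1)).card ≤ (AA L U t ∩ bagAux L (t-1)).card by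
        rw [hcardA]; omega)
    have hXbag : X ⊆ bagAux L (t-1) := hXsub.trans Finset.inter_subset_right
    have hXA : X ⊆ AA L U t := hXsub.trans Finset.inter_subset_left
    refine ⟨bagAux L (t-1) \ X, by rw [Finset.card_sdiff_of_subset hXbag]; omega, ?_⟩
    have hnotS : ∀ v, v ∉ bagAux L (t-1) → v ∉ bagAux L (t-1) \ X := by
      intro v hv hvS; exact hv (Finset.mem_sdiff.mp hvS).1
    have hXS : ∀ v ∈ X, v ∉ bagAux L (t-1) \ X := by
      intro v hv hvS; exact (Finset.mem_sdiff.mp hvS).2 hv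
    have hcov : ∀ v ∈ U \ (bagAux L (t-1) \ X), PP L t v ∨ QQ L t v := by
      intro v hv
      obtain ⟨hvU, hvS⟩ := Finset.mem_sdiff.mp hv
      by_cases hvX : v ∈ X
      · exact Or.inl ((mem_AA.mp (hXA hvX)).2)
      · have hvb : v ∉ bagAux L (t-1) := fun hvb => hvS (Finset.mem_sdiff.mpr ⟨hvb, hvX⟩)
        by_contra hc
        push_neg at hc
        obtain ⟨hnP, hnQ⟩ := hc
        rw [PP] at hnP; push_neg at hnP
        obtain ⟨j1, hj1, htj1, hvj1⟩ := hnP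
        rw [QQ] at hnQ; push_neg at hnQ
        obtain ⟨j2, hj2, hj2t, hvj2⟩ := hnQ
        have hj2ne : j2 ≠ t - 1 := fun h => hvb (h ▸ hvj2)
        exact hvb (mid_bag hL (show j2 < t-1 by omega) (show t-1 < j1 by omega) hj1 hvj2 hvj1)
    have hsideL : (U \ (bagAux L (t-1) \ X)).filter (PP L t) = AA L U (t-1) ∪ X := by
      ext v
      constructor
      · intro hv
        obtain ⟨hvUS, hP⟩ := Finset.mem_filter.mp hv
        obtain ⟨hvU, hvS⟩ := Finset.mem_sdiff.mp hvUS
        by_cases hvX : v ∈ X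
        · exact Finset.mem_union_right _ hvX
        · refine Finset.mem_union_left _ ?_
          have hvb : v ∉ bagAux L (t-1) := fun hvb => hvS (Finset.mem_sdiff.mpr ⟨hvb, hvX⟩)
          refine mem_AA.mpr ⟨hvU, fun j hj htj => ?_⟩
          rcases Nat.eq_or_lt_of_le htj with heq | hlt
          · rw [← heq]; exact hvb
          · exact hP j hj (by omega)
      · intro hv
        rcases Finset.mem_union.mp hv with hvA | hvX
        · obtain ⟨hvU, hP⟩ := mem_AA.mp hvA
          exact Finset.mem_filter.mpr ⟨Finset.mem_sdiff.mpr ⟨hvU, hnotS v (hAbag v hvA)⟩,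
            fun j hj htj => hP j hj (by omega)⟩
        · obtain ⟨hvU, hP⟩ := mem_AA.mp (hXA hvX)
          exact Finset.mem_filter.mpr ⟨Finset.mem_sdiff.mpr ⟨hvU, hXS v hvX⟩, hP⟩
    have hsideR : (U \ (bagAux L (t-1) \ X)).filter (QQ L t) = BB L U t := by
      ext v
      constructor
      · intro hv
        obtain ⟨hvUS, hQ⟩ := Finset.mem_filter.mp hv
        exact mem_BB.mpr ⟨(Finset.mem_sdiff.mp hvUS).1, hQ⟩
      · intro hv
        obtain ⟨hvU, hQ⟩ := mem_BB.mp hv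
        exact Finset.mem_filter.mpr ⟨Finset.mem_sdiff.mpr ⟨hvU, hnotS v (hBbag v hv)⟩, hQ⟩
    have hdisj : Disjoint (AA L U (t-1)) X :=
      Finset.disjoint_left.mpr (fun {v} hvA hvX => hAbag v hvA (hXbag hvX))
    have hcardL : ((U \ (bagAux L (t-1) \ X)).filter (PP L t)).card
        = (AA L U (t-1)).card + ((BB L U t).card - (AA L U (t-1)).card) := by
      rw [hsideL, Finset.card_union_of_disjoint hdisj, hXcard]
    have hcardR : ((U \ (bagAux L (t-1) \ X)).filter (QQ L t)).card = (BB L U t).card := by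
      rw [hsideR]
    have hpart := filter_PQ_card hL hcov
    exact isWeakBalSep_of hL hcov (by omega) (by omega)
  · -- RIGHT CUT: threshold t-1, X taken from B (t-1) ∩ bag (t-1)
    obtain ⟨k, hk1, hk2, hk3, hk4⟩ :
        ∃ k, 1 ≤ k ∧ (BB L U t).card + k ≤ (BB L U (t-1)).card ∧
          (AA L U (t-1)).card ≤ (BB L U t).card + k + 1 ∧
          (BB L U t).card + k ≤ (AA L U (t-1)).card + 1 := by
      rcases Nat.lt_or_ge ((BB L U t).card + 2) (AA L U (t-1)).card with h | h
      · exact ⟨(AA L U (t-1)).card - (BB L U t).card - 1, by omega, by omega, by omega, by omega⟩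
      · exact ⟨1, by omega, by omega, by omega, by omega⟩
    obtain ⟨X, hXsub, hXcard⟩ := Finset.exists_subset_card_eq
      (show k ≤ (BB L U (t-1) ∩ bagAux L (t-1)).card by rw [hcardB]; omega)
    have hXbag : X ⊆ bagAux L (t-1) := hXsub.trans Finset.inter_subset_right
    have hXB : X ⊆ BB L U (t-1) := hXsub.trans Finset.inter_subset_left
    refine ⟨bagAux L (t-1) \ X, by rw [Finset.card_sdiff_of_subset hXbag]; omega, ?_⟩
    have hnotS : ∀ v, v ∉ bagAux L (t-1) → v ∉ bagAux L (t-1) \ X := by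
      intro v hv hvS; exact hv (Finset.mem_sdiff.mp hvS).1
    have hXS : ∀ v ∈ X, v ∉ bagAux L (t-1) \ X := by
      intro v hv hvS; exact (Finset.mem_sdiff.mp hvS).2 hv
    have hcov : ∀ v ∈ U \ (bagAux L (t-1) \ X), PP L (t-1) v ∨ QQ L (t-1) v := by
      intro v hv
      obtain ⟨hvU, hvS⟩ := Finset.mem_sdiff.mp hv
      by_cases hvX : v ∈ X
      · exact Or.inr ((mem_BB.mp (hXB hvX)).2)
      · have hvb : v ∉ bagAux L (t-1) := fun hvb => hvS (Finset.mem_sdiff.mpr ⟨hvb, hvX⟩)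
        by_contra hc
        push_neg at hc
        obtain ⟨hnP, hnQ⟩ := hc
        rw [PP] at hnP; push_neg at hnP
        obtain ⟨j1, hj1, htj1, hvj1⟩ := hnP
        rw [QQ] at hnQ; push_neg at hnQ
        obtain ⟨j2, hj2, hj2t, hvj2⟩ := hnQ
        have hj1ne : j1 ≠ t - 1 := fun h => hvb (h ▸ hvj1)
        exact hvb (mid_bag hL (show j2 < t-1 by omega) (show t-1 < j1 by omega) hj1 hvj2 hvj1)
    have hsideL : (U \ (bagAux L (t-1) \ X)).filter (PP L (t-1)) = AA L U (t-1) := by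
      ext v
      constructor
      · intro hv
        obtain ⟨hvUS, hP⟩ := Finset.mem_filter.mp hv
        exact mem_AA.mpr ⟨(Finset.mem_sdiff.mp hvUS).1, hP⟩
      · intro hv
        obtain ⟨hvU, hP⟩ := mem_AA.mp hv
        exact Finset.mem_filter.mpr ⟨Finset.mem_sdiff.mpr ⟨hvU, hnotS v (hAbag v hv)⟩, hP⟩
    have hsideR : (U \ (bagAux L (t-1) \ X)).filter (QQ L (t-1)) = BB L U t ∪ X := by
      ext v
      constructor
      · intro hv
        obtain ⟨hvUS, hQ⟩ := Finset.mem_filter.mp hv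
        obtain ⟨hvU, hvS⟩ := Finset.mem_sdiff.mp hvUS
        by_cases hvX : v ∈ X
        · exact Finset.mem_union_right _ hvX
        · refine Finset.mem_union_left _ ?_
          have hvb : v ∉ bagAux L (t-1) := fun hvb => hvS (Finset.mem_sdiff.mpr ⟨hvb, hvX⟩)
          refine mem_BB.mpr ⟨hvU, fun j hj hjt => ?_⟩
          rcases Nat.lt_or_ge j (t-1) with hlt | hge
          · exact hQ j hj hlt
          · have hje : j = t - 1 := by omega
            rw [hje]; exact hvb
      · intro hv
        rcases Finset.mem_union.mp hv with hvB | hvX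
        · obtain ⟨hvU, hQ⟩ := mem_BB.mp hvB
          exact Finset.mem_filter.mpr ⟨Finset.mem_sdiff.mpr ⟨hvU, hnotS v (hBbag v hvB)⟩,
            fun j hj hjt => hQ j hj (by omega)⟩
        · obtain ⟨hvU, hQ⟩ := mem_BB.mp (hXB hvX)
          exact Finset.mem_filter.mpr ⟨Finset.mem_sdiff.mpr ⟨hvU, hXS v hvX⟩, hQ⟩
    have hdisj : Disjoint (BB L U t) X :=
      Finset.disjoint_left.mpr (fun {v} hvB hvX => hBbag v hvB (hXbag hvX))
    have hcardL : ((U \ (bagAux L (t-1) \ X)).filter (PP L (t-1))).card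
        = (AA L U (t-1)).card := by rw [hsideL]
    have hcardR : ((U \ (bagAux L (t-1) \ X)).filter (QQ L (t-1))).card
        = (BB L U t).card + k := by
      rw [hsideR, Finset.card_union_of_disjoint hdisj, hXcard]
    have hpart := filter_PQ_card hL hcov
    exact isWeakBalSep_of hL hcov (by omega) (by omega)


theorem dpw_decomp {V : Type*} [Fintype V] (E : V → V → Prop) :
    ∃ L : List (Finset V), IsDirPathDecomp E L ∧ ∀ W ∈ L, W.card ≤ dpw E + 1 := by
  have hmem : Fintype.card V ∈
      {w : ℕ | ∃ L : List (Finset V), IsDirPathDecomp E L ∧ ∀ W ∈ L, W.card ≤ w + 1} := by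
    refine ⟨[Finset.univ],
      ⟨fun v => ⟨Finset.univ, by simp, Finset.mem_univ v⟩, ?_,
        fun u v _ => Or.inl ⟨Finset.univ, by simp, Finset.mem_univ u, Finset.mem_univ v⟩⟩, ?_⟩
    · intro i j k hij hjk hi hj hk
      simp only [List.length_singleton] at hi hk
      omega
    · intro W hW
      simp only [List.mem_singleton] at hW
      subst hW
      rw [Finset.card_univ]
      omega
  exact Nat.sInf_mem ⟨_, hmem⟩

/-- For every digraph `G`, `snum(G) ≤ dpw(G)`. -/
theorem snum_le_dpw {V : Type*} [DecidableEq V] [Fintype V] (E : V → V → Prop) :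
    snum E ≤ dpw E := by
  classical
  refine Finset.sup_le (fun U _ => ?_)
  obtain ⟨L, hL, hwidth⟩ := dpw_decomp E
  obtain ⟨S, hS, hsep⟩ := exists_weak_sep E L hL (dpw E) hwidth U
  exact Nat.sInf_le ⟨S, hS, hsep⟩
end

section
/- For every digraph G, the directed pathwidth of G is at most the cycle rank of G: dpw(G) ≤ crank(G). -/
open scoped Classical

variable {V : Type*}

namespace DpwCrank

variable {E : V → V → Prop}

lemma reachIn_mono {S T : Finset V} (hST : S ⊆ T) {a b : V} (h : ReachIn E S a b) :
    ReachIn E T a b := by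
  induction h with
  | refl => exact Relation.ReflTransGen.refl
  | tail _ hxy ih => exact Relation.ReflTransGen.tail ih ⟨hST hxy.1, hST hxy.2.1, hxy.2.2⟩

lemma acyclicIn_mono {S T : Finset V} (hST : S ⊆ T) (h : AcyclicIn E T) : AcyclicIn E S := by
  rintro ⟨a, ha, b, hb, hab, hba⟩
  exact h ⟨a, hST ha, b, hST hb, hab, reachIn_mono hST hba⟩

open Classical in
/-- ancestors of `v` inside `S` -/
noncomputable def anc (E : V → V → Prop) (S : Finset V) (v : V) : Finset V :=
  S.filter (fun u => ReachIn E S u v)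

lemma mem_anc {S : Finset V} {u v : V} : u ∈ anc E S v ↔ u ∈ S ∧ ReachIn E S u v := by
  simp [anc]

lemma anc_card_lt {S : Finset V} {u w : V} (hu : u ∈ S) (hw : w ∈ S) (huw : E u w)
    (hnr : ¬ ReachIn E S w u) : (anc E S u).card < (anc E S w).card := by
  apply Finset.card_lt_card
  constructor
  · intro x hx
    rw [mem_anc] at hx ⊢
    exact ⟨hx.1, hx.2.tail ⟨hu, hw, huw⟩⟩
  · intro hsup
    exact hnr ((mem_anc.mp (hsup (mem_anc.mpr ⟨hw, Relation.ReflTransGen.refl⟩))).2)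

lemma anc_eq_of_mutual {S : Finset V} {u w : V} (h1 : ReachIn E S u w) (h2 : ReachIn E S w u) :
    anc E S u = anc E S w := by
  ext x
  rw [mem_anc, mem_anc]
  exact ⟨fun hx => ⟨hx.1, hx.2.trans h1⟩, fun hx => ⟨hx.1, hx.2.trans h2⟩⟩

variable [DecidableEq V]

lemma mem_sccOf {S : Finset V} {u v : V} :
    u ∈ sccOf E S v ↔ u ∈ S ∧ ReachIn E S v u ∧ ReachIn E S u v := by
  simp [sccOf]

lemma sccOf_subset {S : Finset V} {v : V} : sccOf E S v ⊆ S := Finset.filter_subset _ _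

lemma mem_sccOf_self {S : Finset V} {v : V} (hv : v ∈ S) : v ∈ sccOf E S v :=
  mem_sccOf.mpr ⟨hv, .refl, .refl⟩

lemma sccOf_ssubset {S : Finset V} (h : ¬ StronglyConnIn E S) {v : V} (hv : v ∈ S) :
    sccOf E S v ⊂ S := by
  rw [Finset.ssubset_iff_of_subset sccOf_subset]
  simp only [StronglyConnIn, not_forall] at h
  obtain ⟨a, ha, b, hb, hab⟩ := h
  by_cases hav : a ∈ sccOf E S v
  · exact ⟨b, hb, fun hbv => hab ((mem_sccOf.mp hav).2.2.trans (mem_sccOf.mp hbv).2.1)⟩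
  · exact ⟨a, ha, hav⟩

/-- a walk between two mutually-reachable vertices stays in their scc -/
lemma reachIn_sccOf {S : Finset V} {u w : V} (h1 : ReachIn E S u w) :
    ReachIn E S w u → ReachIn E (sccOf E S u) u w := by
  induction h1 with
  | refl => intro _; exact .refl
  | @tail b c hub hbc ih =>
    intro h2
    obtain ⟨hbS, hcS, hE⟩ := hbc
    have hbu : ReachIn E S b u := Relation.ReflTransGen.head ⟨hbS, hcS, hE⟩ h2
    have hb : b ∈ sccOf E S u := mem_sccOf.mpr ⟨hbS, hub, hbu⟩
    have hc : c ∈ sccOf E S u := mem_sccOf.mpr ⟨hcS, hub.tail ⟨hbS, hcS, hE⟩, h2⟩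
    exact (ih hbu).tail ⟨hb, hc, hE⟩

lemma sccOf_congr {S : Finset V} {u w : V} (hu : u ∈ S) (hw : w ∈ S)
    (h1 : ReachIn E S u w) (h2 : ReachIn E S w u) : sccOf E S u = sccOf E S w := by
  ext x
  rw [mem_sccOf, mem_sccOf]
  exact ⟨fun hx => ⟨hx.1, h2.trans hx.2.1, hx.2.2.trans h1⟩,
         fun hx => ⟨hx.1, h1.trans hx.2.1, hx.2.2.trans h2⟩⟩

end DpwCrank
namespace DpwCrank

variable {E : V → V → Prop}

lemma exists_min_vertex {S : Finset V} (hS : S.Nonempty) :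
    ∃ v ∈ S, ∀ u ∈ S, E u v → ReachIn E S v u := by
  obtain ⟨v, hv, hmin⟩ := S.exists_min_image (fun v => (anc E S v).card) hS
  refine ⟨v, hv, fun u hu huv => ?_⟩
  by_contra hnr
  exact absurd (hmin u hu) (not_le.mpr (anc_card_lt hu hv huv hnr))

lemma exists_source_acyclic {S : Finset V} (hS : S.Nonempty) (hA : AcyclicIn E S) :
    ∃ v ∈ S, ∀ u ∈ S, ¬ E u v := by
  obtain ⟨v, hv, hmin⟩ := exists_min_vertex (E := E) hS
  exact ⟨v, hv, fun u hu huv => hA ⟨u, hu, v, hv, huv, hmin u hu huv⟩⟩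

variable [DecidableEq V]

lemma exists_source_scc {S : Finset V} (hS : S.Nonempty) :
    ∃ v₀ ∈ S, ∀ u ∈ S \ sccOf E S v₀, ∀ w ∈ sccOf E S v₀, ¬ E u w := by
  obtain ⟨v₀, hv₀, hmin⟩ := S.exists_min_image (fun v => (anc E S v).card) hS
  refine ⟨v₀, hv₀, fun u hu w hw huw => ?_⟩
  rw [Finset.mem_sdiff] at hu
  rw [mem_sccOf] at hw
  have hwu : ReachIn E S w u := by
    by_contra hnr
    have h1 : (anc E S u).card < (anc E S w).card := anc_card_lt hu.1 hw.1 huw hnr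
    have h2 : anc E S w = anc E S v₀ := anc_eq_of_mutual hw.2.2 hw.2.1
    exact absurd (hmin u hu.1) (not_le.mpr (h2 ▸ h1))
  exact hu.2 (mem_sccOf.mpr ⟨hu.1, hw.2.1.trans hwu,
    (Relation.ReflTransGen.single ⟨hu.1, hw.1, huw⟩).trans hw.2.2⟩)

/-- sccs of `S` not containing `v₀` are disjoint from `sccOf v₀` -/
lemma sccOf_disjoint_of_not_mem {S : Finset V} {u v₀ : V} (hu : u ∈ S)
    (huC : u ∉ sccOf E S v₀) : ∀ x ∈ sccOf E S u, x ∉ sccOf E S v₀ := by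
  intro x hx hxC
  rw [mem_sccOf] at hx hxC
  exact huC (mem_sccOf.mpr ⟨hu, hxC.2.1.trans hx.2.2, hx.2.1.trans hxC.2.2⟩)

lemma sccOf_subset_sdiff {S : Finset V} {u v₀ : V} (hu : u ∈ S \ sccOf E S v₀) :
    sccOf E S u ⊆ S \ sccOf E S v₀ := by
  rw [Finset.mem_sdiff] at hu
  intro x hx
  exact Finset.mem_sdiff.mpr ⟨sccOf_subset hx, sccOf_disjoint_of_not_mem hu.1 hu.2 x hx⟩

lemma sccOf_sdiff {S : Finset V} {u v₀ : V} (hu : u ∈ S \ sccOf E S v₀) :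
    sccOf E (S \ sccOf E S v₀) u = sccOf E S u := by
  set T := S \ sccOf E S v₀ with hT
  have hTS : T ⊆ S := Finset.sdiff_subset
  ext x
  rw [mem_sccOf, mem_sccOf]
  constructor
  · intro hx
    exact ⟨hTS hx.1, reachIn_mono hTS hx.2.1, reachIn_mono hTS hx.2.2⟩
  · intro hx
    have hxT : x ∈ T := sccOf_subset_sdiff hu (mem_sccOf.mpr hx)
    have h1 : ReachIn E (sccOf E S u) u x := reachIn_sccOf hx.2.1 hx.2.2
    have h2 : ReachIn E (sccOf E S x) x u := reachIn_sccOf hx.2.2 hx.2.1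
    rw [sccOf_congr hx.1 (hTS hu) hx.2.2 hx.2.1] at h2
    exact ⟨hxT, reachIn_mono (sccOf_subset_sdiff hu) h1,
      reachIn_mono (sccOf_subset_sdiff hu) h2⟩

/-- if `T = S \ sccOf v₀` is strongly connected and nonempty, it is an scc of `S` -/
lemma sdiff_eq_sccOf {S : Finset V} {u v₀ : V} (hu : u ∈ S \ sccOf E S v₀)
    (hSC : StronglyConnIn E (S \ sccOf E S v₀)) :
    S \ sccOf E S v₀ = sccOf E S u := by
  set T := S \ sccOf E S v₀ with hT
  have hTS : T ⊆ S := Finset.sdiff_subset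
  apply Finset.Subset.antisymm
  · intro x hx
    exact mem_sccOf.mpr ⟨hTS hx, reachIn_mono hTS (hSC u hu x hx),
      reachIn_mono hTS (hSC x hx u hu)⟩
  · exact sccOf_subset_sdiff hu

end DpwCrank
namespace DpwCrank

variable {E : V → V → Prop} [DecidableEq V]

lemma acyclicIn_empty : AcyclicIn E (∅ : Finset V) := by
  rintro ⟨a, ha, _⟩
  exact absurd ha (Finset.notMem_empty a)

lemma nonempty_of_not_acyclic {S : Finset V} (h : ¬ AcyclicIn E S) : S.Nonempty := by
  rw [AcyclicIn, not_not] at h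
  obtain ⟨a, ha, _⟩ := h
  exact ⟨a, ha⟩

lemma crankAux_succ (E : V → V → Prop) (n : ℕ) (S : Finset V) :
    crankAux E (n + 1) S =
      if AcyclicIn E S then 0
      else if StronglyConnIn E S then
        1 + sInf {m | ∃ v ∈ S, crankAux E n (S.erase v) = m}
      else S.sup (fun v => crankAux E n (sccOf E S v)) := rfl

lemma crankAux_fuel (E : V → V → Prop) :
    ∀ n (S : Finset V), S.card ≤ n → crankAux E (n + 1) S = crankAux E n S := by
  intro n
  induction n with
  | zero =>
    intro S hS
    have : S = ∅ := Finset.card_eq_zero.mp (Nat.le_antisymm hS (Nat.zero_le _))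
    subst this
    simp [crankAux, acyclicIn_empty]
  | succ m ih =>
    intro S hS
    by_cases hA : AcyclicIn E S
    · simp [crankAux, hA]
    by_cases hSC : StronglyConnIn E S
    · have hne := nonempty_of_not_acyclic hA
      conv_lhs => rw [crankAux_succ]
      conv_rhs => rw [crankAux_succ]
      simp only [hA, hSC, if_false, if_true]
      congr 1
      have hsets : {x | ∃ v ∈ S, crankAux E (m + 1) (S.erase v) = x} =
          {x | ∃ v ∈ S, crankAux E m (S.erase v) = x} := by
        ext x
        constructor
        · rintro ⟨v, hv, rfl⟩
          refine ⟨v, hv, ?_⟩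
          rw [ih (S.erase v) ?_]
          rw [Finset.card_erase_of_mem hv]
          omega
        · rintro ⟨v, hv, rfl⟩
          refine ⟨v, hv, ?_⟩
          rw [ih (S.erase v) ?_]
          rw [Finset.card_erase_of_mem hv]
          omega
      rw [hsets]
    · conv_lhs => rw [crankAux_succ]
      conv_rhs => rw [crankAux_succ]
      simp only [hA, hSC, if_false]
      apply Finset.sup_congr rfl
      intro v hv
      apply ih
      have := Finset.card_lt_card (sccOf_ssubset hSC hv)
      omega

lemma crank_sdiff_le_sup (E : V → V → Prop) {S : Finset V} {v₀ : V} (hv₀ : v₀ ∈ S) :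
    ∀ n, (S \ sccOf E S v₀).card ≤ n →
    crankAux E n (S \ sccOf E S v₀) ≤ S.sup (fun v => crankAux E n (sccOf E S v)) := by
  intro n hcard
  set T := S \ sccOf E S v₀ with hT
  by_cases hA : AcyclicIn E T
  · cases n with
    | zero => simp [crankAux]
    | succ m => simp [crankAux, hA]
  by_cases hSC : StronglyConnIn E T
  · obtain ⟨u, hu⟩ := nonempty_of_not_acyclic hA
    have heq : T = sccOf E S u := sdiff_eq_sccOf hu hSC
    calc crankAux E n T = crankAux E n (sccOf E S u) := by rw [← heq]
      _ ≤ _ := Finset.le_sup (f := fun v => crankAux E n (sccOf E S v))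
          (Finset.sdiff_subset hu)
  · cases n with
    | zero => simp [crankAux]
    | succ m =>
      conv_lhs => rw [crankAux_succ]
      simp only [hA, hSC, if_false]
      apply Finset.sup_le
      intro u hu
      have h1 : sccOf E T u = sccOf E S u := sccOf_sdiff hu
      have h2 : (sccOf E T u).card ≤ m := by
        have := Finset.card_lt_card (sccOf_ssubset hSC hu)
        omega
      calc crankAux E m (sccOf E T u)
          = crankAux E (m + 1) (sccOf E T u) := (crankAux_fuel E m _ h2).symm
        _ = crankAux E (m + 1) (sccOf E S u) := by rw [h1]
        _ ≤ _ := Finset.le_sup (f := fun v => crankAux E (m + 1) (sccOf E S v))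
            (Finset.sdiff_subset hu)

end DpwCrank
namespace DpwCrank

/-- path decomposition of the induced subdigraph `G[S]` -/
def DecompIn (E : V → V → Prop) (S : Finset V) (L : List (Finset V)) : Prop :=
  (∀ v ∈ S, ∃ W ∈ L, v ∈ W) ∧
  (∀ W ∈ L, W ⊆ S) ∧
  (∀ i j k : ℕ, i < j → j < k →
    ∀ (hi : i < L.length) (hj : j < L.length) (hk : k < L.length),
      ∀ v, v ∈ L.get ⟨i, hi⟩ → v ∈ L.get ⟨k, hk⟩ → v ∈ L.get ⟨j, hj⟩) ∧
  (∀ u ∈ S, ∀ w ∈ S, E u w → (∃ W ∈ L, u ∈ W ∧ w ∈ W) ∨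
      ∃ (i j : ℕ) (hi : i < L.length) (hj : j < L.length),
        i < j ∧ u ∈ L.get ⟨i, hi⟩ ∧ w ∈ L.get ⟨j, hj⟩)

variable {E : V → V → Prop} [DecidableEq V]

lemma decompIn_nil : DecompIn E (∅ : Finset V) [] := by
  refine ⟨?_, ?_, ?_, ?_⟩
  · intro v hv; exact absurd hv (Finset.notMem_empty v)
  · intro W hW; exact absurd hW (List.not_mem_nil)
  · intro i j k _ _ _ hj _; simp at hj
  · intro u hu; exact absurd hu (Finset.notMem_empty u)

lemma decompIn_cons {S : Finset V} {L : List (Finset V)} {v : V}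
    (hL : DecompIn E S L) (hv : v ∉ S) (hnoedge : ∀ u ∈ S, ¬ E u v) :
    DecompIn E (insert v S) ({v} :: L) := by
  obtain ⟨hcov, hsub, hint, hedge⟩ := hL
  refine ⟨?_, ?_, ?_, ?_⟩
  · intro u hu
    rcases Finset.mem_insert.mp hu with rfl | hu
    · exact ⟨{u}, List.mem_cons_self, Finset.mem_singleton_self _⟩
    · obtain ⟨W, hW, hW2⟩ := hcov u hu
      exact ⟨W, List.mem_cons_of_mem _ hW, hW2⟩
  · intro W hW
    rcases List.mem_cons.mp hW with rfl | hW
    · intro x hx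
      rw [Finset.mem_singleton] at hx
      subst hx
      exact Finset.mem_insert_self _ _
    · exact fun x hx => Finset.mem_insert_of_mem (hsub W hW hx)
  · intro i j k hij hjk hi hj hk x hxi hxk
    have hlc : ({v} :: L).length = L.length + 1 := by simp
    simp only [List.get_eq_getElem] at hxi hxk ⊢
    obtain ⟨j', rfl⟩ : ∃ t, j = t + 1 := ⟨j - 1, by omega⟩
    obtain ⟨k', rfl⟩ : ∃ t, k = t + 1 := ⟨k - 1, by omega⟩
    rw [List.getElem_cons_succ] at hxk ⊢
    cases i with
    | zero =>
      rw [List.getElem_cons_zero, Finset.mem_singleton] at hxi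
      subst hxi
      exact absurd (hsub _ (List.getElem_mem _) hxk) hv
    | succ i' =>
      rw [List.getElem_cons_succ] at hxi
      exact hint i' j' k' (by omega) (by omega) (by omega) (by omega) (by omega) x hxi hxk
  · intro u hu w hw hE
    rcases Finset.mem_insert.mp hu with rfl | hu'
    · rcases Finset.mem_insert.mp hw with rfl | hw'
      · refine Or.inl ⟨_, List.mem_cons_self, ?_, ?_⟩ <;> simp
      · obtain ⟨W, hWL, hwW⟩ := hcov w hw'
        obtain ⟨jdx, hjdx, rfl⟩ := List.mem_iff_getElem.mp hWL
        refine Or.inr ⟨0, jdx + 1, by simp, by simp [Nat.succ_lt_succ hjdx], Nat.succ_pos _, ?_, ?_⟩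
        · simp
        · simpa using hwW
    · rcases Finset.mem_insert.mp hw with rfl | hw'
      · exact absurd hE (hnoedge u hu')
      · rcases hedge u hu' w hw' hE with ⟨W, hWL, h1, h2⟩ | ⟨i, j, hi, hj, hij, h1, h2⟩
        · exact Or.inl ⟨W, List.mem_cons_of_mem _ hWL, h1, h2⟩
        · refine Or.inr ⟨i + 1, j + 1, by simpa using Nat.succ_lt_succ hi,
            by simpa using Nat.succ_lt_succ hj, by omega, ?_, ?_⟩
          · simpa using h1
          · simpa using h2

lemma decompIn_insert {S : Finset V} {L : List (Finset V)} {v : V}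
    (hL : DecompIn E S L) (hv : v ∉ S) :
    DecompIn E (insert v S) ({v} :: L.map (insert v)) := by
  obtain ⟨hcov, hsub, hint, hedge⟩ := hL
  have hlen : (L.map (insert v)).length = L.length := List.length_map _
  refine ⟨?_, ?_, ?_, ?_⟩
  · intro u hu
    rcases Finset.mem_insert.mp hu with rfl | hu
    · exact ⟨{u}, List.mem_cons_self, Finset.mem_singleton_self _⟩
    · obtain ⟨W, hW, hW2⟩ := hcov u hu
      exact ⟨insert v W, List.mem_cons_of_mem _ (List.mem_map_of_mem hW),
        Finset.mem_insert_of_mem hW2⟩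
  · intro W hW
    rcases List.mem_cons.mp hW with rfl | hW
    · intro x hx
      rw [Finset.mem_singleton] at hx
      subst hx
      exact Finset.mem_insert_self _ _
    · obtain ⟨W', hW', rfl⟩ := List.mem_map.mp hW
      intro x hx
      rcases Finset.mem_insert.mp hx with rfl | hx
      · exact Finset.mem_insert_self _ _
      · exact Finset.mem_insert_of_mem (hsub W' hW' hx)
  · intro i j k hij hjk hi hj hk x hxi hxk
    have hlc : ({v} :: L.map (insert v)).length = L.length + 1 := by simp
    simp only [List.get_eq_getElem] at hxi hxk ⊢
    by_cases hxv : x = v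
    · subst hxv
      obtain ⟨j', rfl⟩ : ∃ t, j = t + 1 := ⟨j - 1, by omega⟩
      rw [List.getElem_cons_succ, List.getElem_map]
      exact Finset.mem_insert_self _ _
    · obtain ⟨j', rfl⟩ : ∃ t, j = t + 1 := ⟨j - 1, by omega⟩
      obtain ⟨k', rfl⟩ : ∃ t, k = t + 1 := ⟨k - 1, by omega⟩
      obtain ⟨i', rfl⟩ : ∃ t, i = t + 1 := by
        cases i with
        | zero =>
          rw [List.getElem_cons_zero, Finset.mem_singleton] at hxi
          exact absurd hxi hxv
        | succ i' => exact ⟨i', rfl⟩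
      rw [List.getElem_cons_succ, List.getElem_map] at hxi hxk ⊢
      rw [Finset.mem_insert] at hxi hxk
      rcases hxi with rfl | hxi
      · exact absurd rfl hxv
      rcases hxk with rfl | hxk
      · exact absurd rfl hxv
      exact Finset.mem_insert_of_mem
        (hint i' j' k' (by omega) (by omega) (by omega) (by omega) (by omega) x hxi hxk)
  · intro u hu w hw hE
    have hbag : ∀ x ∈ S, ∃ W ∈ ({v} :: L.map (insert v)), x ∈ W ∧ v ∈ W := by
      intro x hx
      obtain ⟨W, hW, hW2⟩ := hcov x hx
      exact ⟨insert v W, List.mem_cons_of_mem _ (List.mem_map_of_mem hW),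
        Finset.mem_insert_of_mem hW2, Finset.mem_insert_self _ _⟩
    rcases Finset.mem_insert.mp hu with rfl | hu'
    · rcases Finset.mem_insert.mp hw with rfl | hw'
      · refine Or.inl ⟨_, List.mem_cons_self, ?_, ?_⟩ <;> simp
      · obtain ⟨W, hW, h1, h2⟩ := hbag w hw'
        exact Or.inl ⟨W, hW, h2, h1⟩
    · rcases Finset.mem_insert.mp hw with rfl | hw'
      · obtain ⟨W, hW, h1, h2⟩ := hbag u hu'
        exact Or.inl ⟨W, hW, h1, h2⟩
      · rcases hedge u hu' w hw' hE with ⟨W, hWL, h1, h2⟩ | ⟨i, j, hi, hj, hij, h1, h2⟩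
        · exact Or.inl ⟨insert v W, List.mem_cons_of_mem _ (List.mem_map_of_mem hWL),
            Finset.mem_insert_of_mem h1, Finset.mem_insert_of_mem h2⟩
        · refine Or.inr ⟨i + 1, j + 1, ?_, ?_, by omega, ?_, ?_⟩
          · simp only [List.length_cons, hlen]; omega
          · simp only [List.length_cons, hlen]; omega
          · simp only [List.get_eq_getElem, List.getElem_cons_succ, List.getElem_map]
            exact Finset.mem_insert_of_mem (by simpa using h1)
          · simp only [List.get_eq_getElem, List.getElem_cons_succ, List.getElem_map]
            exact Finset.mem_insert_of_mem (by simpa using h2)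

lemma decompIn_append {S T : Finset V} {L₁ L₂ : List (Finset V)}
    (h₁ : DecompIn E S L₁) (h₂ : DecompIn E T L₂) (hdisj : Disjoint S T)
    (hnoedge : ∀ u ∈ T, ∀ w ∈ S, ¬ E u w) :
    DecompIn E (S ∪ T) (L₁ ++ L₂) := by
  obtain ⟨hcov₁, hsub₁, hint₁, hedge₁⟩ := h₁
  obtain ⟨hcov₂, hsub₂, hint₂, hedge₂⟩ := h₂
  refine ⟨?_, ?_, ?_, ?_⟩
  · intro u hu
    rcases Finset.mem_union.mp hu with hu | hu
    · obtain ⟨W, hW, hW2⟩ := hcov₁ u hu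
      exact ⟨W, List.mem_append_left _ hW, hW2⟩
    · obtain ⟨W, hW, hW2⟩ := hcov₂ u hu
      exact ⟨W, List.mem_append_right _ hW, hW2⟩
  · intro W hW
    rcases List.mem_append.mp hW with hW | hW
    · exact fun x hx => Finset.mem_union_left _ (hsub₁ W hW hx)
    · exact fun x hx => Finset.mem_union_right _ (hsub₂ W hW hx)
  · intro i j k hij hjk hi hj hk x hxi hxk
    have hla : (L₁ ++ L₂).length = L₁.length + L₂.length := by simp
    simp only [List.get_eq_getElem] at hxi hxk ⊢
    by_cases hkl : k < L₁.length
    · rw [List.getElem_append_left (show i < L₁.length by omega)] at hxi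
      rw [List.getElem_append_left (show k < L₁.length by omega)] at hxk
      rw [List.getElem_append_left (show j < L₁.length by omega)]
      exact hint₁ i j k hij hjk (by omega) (by omega) hkl x hxi hxk
    · by_cases hil : i < L₁.length
      · rw [List.getElem_append_left hil] at hxi
        rw [List.getElem_append_right (show L₁.length ≤ k by omega)] at hxk
        have hxS : x ∈ S := hsub₁ _ (List.getElem_mem _) hxi
        have hxT : x ∈ T := hsub₂ _ (List.getElem_mem _) hxk
        exact absurd hxT (Finset.disjoint_left.mp hdisj hxS)
      · rw [List.getElem_append_right (show L₁.length ≤ i by omega)] at hxi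
        rw [List.getElem_append_right (show L₁.length ≤ k by omega)] at hxk
        rw [List.getElem_append_right (show L₁.length ≤ j by omega)]
        exact hint₂ (i - L₁.length) (j - L₁.length) (k - L₁.length)
          (by omega) (by omega) (by omega) (by omega) (by omega) x hxi hxk
  · intro u hu w hw hE
    have memS : ∀ x ∈ S, x ∉ T := fun x hx => Finset.disjoint_left.mp hdisj hx
    rcases Finset.mem_union.mp hu with hu' | hu'
    · rcases Finset.mem_union.mp hw with hw' | hw'
      · rcases hedge₁ u hu' w hw' hE with ⟨W, hWL, h1, h2⟩ | ⟨i, j, hi, hj, hij, h1, h2⟩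
        · exact Or.inl ⟨W, List.mem_append_left _ hWL, h1, h2⟩
        · refine Or.inr ⟨i, j, ?_, ?_, hij, ?_, ?_⟩
          · simp only [List.length_append]; omega
          · simp only [List.length_append]; omega
          · simp only [List.get_eq_getElem]
            rw [List.getElem_append_left hi]
            simpa using h1
          · simp only [List.get_eq_getElem]
            rw [List.getElem_append_left hj]
            simpa using h2
      · -- u ∈ S, w ∈ T : u in L₁ bag, w in L₂ bag
        obtain ⟨Wu, hWu, hu2⟩ := hcov₁ u hu'
        obtain ⟨i, hi, rfl⟩ := List.mem_iff_getElem.mp hWu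
        obtain ⟨Ww, hWw, hw2⟩ := hcov₂ w hw'
        obtain ⟨j, hj, rfl⟩ := List.mem_iff_getElem.mp hWw
        refine Or.inr ⟨i, L₁.length + j, ?_, ?_, by omega, ?_, ?_⟩
        · simp only [List.length_append]; omega
        · simp only [List.length_append]; omega
        · simp only [List.get_eq_getElem]
          rw [List.getElem_append_left hi]
          exact hu2
        · simp only [List.get_eq_getElem]
          rw [List.getElem_append_right (show L₁.length ≤ L₁.length + j by omega)]
          simpa using hw2
    · rcases Finset.mem_union.mp hw with hw' | hw'
      · exact absurd hE (hnoedge u hu' w hw')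
      · rcases hedge₂ u hu' w hw' hE with ⟨W, hWL, h1, h2⟩ | ⟨i, j, hi, hj, hij, h1, h2⟩
        · exact Or.inl ⟨W, List.mem_append_right _ hWL, h1, h2⟩
        · refine Or.inr ⟨L₁.length + i, L₁.length + j, ?_, ?_, by omega, ?_, ?_⟩
          · simp only [List.length_append]; omega
          · simp only [List.length_append]; omega
          · simp only [List.get_eq_getElem]
            rw [List.getElem_append_right (show L₁.length ≤ L₁.length + i by omega)]
            simpa using h1
          · simp only [List.get_eq_getElem]
            rw [List.getElem_append_right (show L₁.length ≤ L₁.length + j by omega)]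
            simpa using h2

end DpwCrank
namespace DpwCrank

variable {E : V → V → Prop} [DecidableEq V]

lemma acyclic_decomp :
    ∀ n (S : Finset V), S.card ≤ n → AcyclicIn E S →
      ∃ L, DecompIn E S L ∧ ∀ W ∈ L, W.card ≤ 1 := by
  intro n
  induction n with
  | zero =>
    intro S hS _
    have : S = ∅ := Finset.card_eq_zero.mp (Nat.le_antisymm hS (Nat.zero_le _))
    subst this
    exact ⟨[], decompIn_nil, by simp⟩
  | succ m ih =>
    intro S hS hA
    rcases S.eq_empty_or_nonempty with rfl | hne
    · exact ⟨[], decompIn_nil, by simp⟩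
    obtain ⟨v, hv, hsrc⟩ := exists_source_acyclic hne hA
    have hcard : (S.erase v).card ≤ m := by
      rw [Finset.card_erase_of_mem hv]; omega
    obtain ⟨L', hL', hB⟩ := ih (S.erase v) hcard (acyclicIn_mono (Finset.erase_subset _ _) hA)
    refine ⟨{v} :: L', ?_, ?_⟩
    · have := decompIn_cons hL' (Finset.notMem_erase v S)
        (fun u hu => hsrc u (Finset.mem_of_mem_erase hu))
      rwa [Finset.insert_erase hv] at this
    · intro W hW
      rcases List.mem_cons.mp hW with rfl | hW
      · simp
      · exact hB W hW

lemma main_decomp (E : V → V → Prop) :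
    ∀ n (S : Finset V), S.card ≤ n →
      ∃ L, DecompIn E S L ∧ ∀ W ∈ L, W.card ≤ crankAux E n S + 1 := by
  intro n
  induction n with
  | zero =>
    intro S hS
    have : S = ∅ := Finset.card_eq_zero.mp (Nat.le_antisymm hS (Nat.zero_le _))
    subst this
    exact ⟨[], decompIn_nil, by simp⟩
  | succ m ih =>
    intro S hS
    by_cases hA : AcyclicIn E S
    · obtain ⟨L, hL, hB⟩ := acyclic_decomp (m + 1) S hS hA
      exact ⟨L, hL, fun W hW => le_trans (hB W hW) (by omega)⟩
    by_cases hSC : StronglyConnIn E S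
    · -- strongly connected case
      have hne : S.Nonempty := nonempty_of_not_acyclic hA
      have hAne : {x | ∃ v ∈ S, crankAux E m (S.erase v) = x}.Nonempty :=
        ⟨_, hne.choose, hne.choose_spec, rfl⟩
      obtain ⟨v, hv, hval⟩ := Nat.sInf_mem hAne
      have hcard : (S.erase v).card ≤ m := by
        rw [Finset.card_erase_of_mem hv]; omega
      obtain ⟨L', hL', hB⟩ := ih (S.erase v) hcard
      have hcr : crankAux E (m + 1) S =
          1 + sInf {x | ∃ v ∈ S, crankAux E m (S.erase v) = x} := by
        rw [crankAux_succ]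
        simp [hA, hSC]
      refine ⟨{v} :: L'.map (insert v), ?_, ?_⟩
      · have := decompIn_insert hL' (Finset.notMem_erase v S)
        rwa [Finset.insert_erase hv] at this
      · intro W hW
        rcases List.mem_cons.mp hW with rfl | hW
        · simp [hcr]
        · obtain ⟨W', hW', rfl⟩ := List.mem_map.mp hW
          calc (insert v W').card ≤ W'.card + 1 := Finset.card_insert_le _ _
            _ ≤ (crankAux E m (S.erase v) + 1) + 1 := by
                have := hB W' hW'; omega
            _ = crankAux E (m + 1) S + 1 := by rw [hcr, hval]; omega
    · -- general case: split off a source scc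
      have hne : S.Nonempty := nonempty_of_not_acyclic hA
      obtain ⟨v₀, hv₀, hsrc⟩ := exists_source_scc (E := E) hne
      set C := sccOf E S v₀ with hC
      set T := S \ C with hTdef
      have hCS : C ⊆ S := sccOf_subset
      have hCcard : C.card ≤ m := by
        have hss : C ⊂ S := sccOf_ssubset hSC hv₀
        have := Finset.card_lt_card hss
        omega
      have hTcard : T.card ≤ m := by
        have h1 : v₀ ∈ C := mem_sccOf_self hv₀
        have h2 : T ⊂ S := Finset.sdiff_ssubset hCS ⟨v₀, h1⟩
        have := Finset.card_lt_card h2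
        omega
      have hsup : crankAux E (m + 1) S = S.sup (fun v => crankAux E m (sccOf E S v)) := by
        rw [crankAux_succ]
        simp [hA, hSC]
      obtain ⟨L₁, hL₁, hB₁⟩ := ih C hCcard
      obtain ⟨L₂, hL₂, hB₂⟩ := ih T hTcard
      have hdisj : Disjoint C T := Finset.disjoint_sdiff
      have happ := decompIn_append hL₁ hL₂ hdisj (fun u hu w hw => hsrc u hu w hw)
      have hunion : C ∪ T = S := by
        rw [hTdef, Finset.union_sdiff_of_subset hCS]
      rw [hunion] at happ
      refine ⟨L₁ ++ L₂, happ, ?_⟩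
      intro W hW
      rcases List.mem_append.mp hW with hW | hW
      · calc W.card ≤ crankAux E m C + 1 := hB₁ W hW
          _ ≤ crankAux E (m + 1) S + 1 := by
              rw [hsup]
              have : crankAux E m C ≤ S.sup (fun v => crankAux E m (sccOf E S v)) :=
                Finset.le_sup (f := fun v => crankAux E m (sccOf E S v)) hv₀
              omega
      · calc W.card ≤ crankAux E m T + 1 := hB₂ W hW
          _ ≤ crankAux E (m + 1) S + 1 := by
              rw [hsup]
              have h := crank_sdiff_le_sup E hv₀ m (by rw [← hC, ← hTdef]; exact hTcard)
              rw [← hC, ← hTdef] at h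
              omega

end DpwCrank
/-- For every digraph `G`, `dpw(G) ≤ crank(G)`. -/
theorem dpw_le_crank {V : Type*} [DecidableEq V] [Fintype V] (E : V → V → Prop) :
    dpw E ≤ crank E := by
  obtain ⟨L, hL, hB⟩ := DpwCrank.main_decomp E (Fintype.card V) Finset.univ
    (le_of_eq (Finset.card_univ))
  obtain ⟨hcov, hsub, hint, hedge⟩ := hL
  apply Nat.sInf_le
  refine ⟨L, ⟨?_, hint, ?_⟩, ?_⟩
  · intro v
    exact hcov v (Finset.mem_univ v)
  · intro u v hE
    exact hedge u (Finset.mem_univ u) v (Finset.mem_univ v) hE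
  · exact hB
end
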